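/- arXiv:1912.07909 — 3 statements merged into one kernel-verified Lean document; each statement's English description precedes it below -/
import Mathlib

section
/- Let $Z=(\zeta_1,\dots,\zeta_{N_Z})$ with $\zeta_1=0$, $\zeta_{N_Z}=1$ be a strictly increasing vector of breakpoints with grid size $h:=\max_i (\zeta_{i+1}-\zeta_i)$. Then for every $\widetilde h \ge 3h$, there exists a subsequence $\widetilde Z=(\widetilde\zeta_1,\dots,\widetilde\zeta_{N_{\widetilde Z}})$ of $Z$ with $\widetilde\zeta_1=0$, $\widetilde\zeta_{N_{\widetilde Z}}=1$, such that $\min\{1,\tfrac13\widetilde h\} \le \widetilde\zeta_{i+1}-\widetilde\zeta_i \le \widetilde h$ for all $i=1,\dots,N_{\widetilde Z}-1$. -/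
open Classical in
lemma aux_coarsen (ht : ℝ) (hpos : 0 < ht) (ζ : ℕ → ℝ) :
    ∀ d a, (∀ i, a ≤ i → i < a + d → ζ i < ζ (i+1) ∧ ζ (i+1) - ζ i ≤ ht/3) →
    ht/3 ≤ ζ (a + d) - ζ a →
    ∃ (m : ℕ) (σ : Fin (m+1) → ℕ), StrictMono σ ∧ σ 0 = a ∧
      σ (Fin.last m) = a + d ∧
      ∀ i : Fin m, ht/3 ≤ ζ (σ i.succ) - ζ (σ i.castSucc) ∧
        ζ (σ i.succ) - ζ (σ i.castSucc) ≤ ht := by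
  intro d
  induction d using Nat.strong_induction_on with
  | _ d IH =>
  intro a hgaps hlen
  by_cases hcase : ζ (a + d) - ζ a ≤ ht
  · -- single jump
    have hd : 0 < d := by
      by_contra hd
      push_neg at hd
      interval_cases d
      simp at hlen; linarith
    refine ⟨1, ![a, a + d], ?_, rfl, rfl, ?_⟩
    · rw [Fin.strictMono_iff_lt_succ]
      intro i
      rw [Subsingleton.elim i 0]
      simp only [Fin.castSucc_zero, Fin.succ_zero_eq_one, Matrix.cons_val_zero,
        Matrix.cons_val_one, Matrix.head_cons]
      omega
    · intro i
      rw [Subsingleton.elim i 0]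
      simp only [Fin.castSucc_zero, Fin.succ_zero_eq_one, Matrix.cons_val_zero,
        Matrix.cons_val_one, Matrix.head_cons]
      exact ⟨hlen, hcase⟩
  · push_neg at hcase
    have hex : ∃ j, 2*ht/3 < ζ (a+j) - ζ a := ⟨d, by linarith⟩
    set j0 := Nat.find hex with hj0def
    have hj0spec : 2*ht/3 < ζ (a + j0) - ζ a := Nat.find_spec hex
    have hj0pos : 0 < j0 := by
      rcases Nat.eq_zero_or_pos j0 with h0 | h
      · exfalso; rw [h0] at hj0spec; simp at hj0spec; linarith
      · exact h
    have hj0le : j0 ≤ d := Nat.find_le (by linarith)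
    set k := j0 - 1 with hkdef
    have hk1 : k + 1 = j0 := Nat.succ_pred_eq_of_pos hj0pos
    have hkd : k < d := by omega
    have hkub : ζ (a+k) - ζ a ≤ 2*ht/3 := le_of_not_gt (Nat.find_min hex (by omega))
    have hstep := hgaps (a+k) (by omega) (by omega)
    have hspec' : 2*ht/3 < ζ (a+k+1) - ζ a := by
      have heq : a + k + 1 = a + j0 := by omega
      rw [heq]; exact hj0spec
    have hklb : ht/3 ≤ ζ (a+k) - ζ a := by
      have := hstep.2; linarith
    have hkpos : 0 < k := by
      rcases Nat.eq_zero_or_pos k with h0 | h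
      · exfalso; rw [h0] at hklb; simp at hklb; linarith
      · exact h
    obtain ⟨m, σ, hσmono, hσ0, hσlast, hσgap⟩ := IH (d - k) (by omega) (a + k)
      (fun i h1 h2 => hgaps i (by omega) (by omega))
      (by
        have heq : a + k + (d - k) = a + d := by omega
        rw [heq]; linarith)
    refine ⟨m+1, Fin.cons a σ, ?_, rfl, ?_, ?_⟩
    · rw [Fin.strictMono_iff_lt_succ]
      intro i
      induction i using Fin.cases with
      | zero =>
        rw [show ((0 : Fin (m+1)).succ) = (0 : Fin (m+1)).succ from rfl, Fin.cons_succ]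
        simp only [Fin.castSucc_zero, Fin.cons_zero, hσ0]
        omega
      | succ j =>
        rw [← Fin.succ_castSucc, Fin.cons_succ, Fin.cons_succ]
        exact hσmono (Fin.castSucc_lt_succ (i := j))
    · rw [← Fin.succ_last, Fin.cons_succ, hσlast]; omega
    · intro i
      induction i using Fin.cases with
      | zero =>
        rw [show ((0 : Fin (m+1)).succ : Fin (m+2)) = (0 : Fin (m+1)).succ from rfl,
          Fin.cons_succ]
        simp only [Fin.castSucc_zero, Fin.cons_zero, hσ0]
        exact ⟨hklb, by linarith⟩
      | succ j =>
        rw [← Fin.succ_castSucc, Fin.cons_succ, Fin.cons_succ]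
        exact hσgap j

/-- existence of a coarsened subsequence of breakpoints with gaps
between `min 1 (h̃/3)` and `h̃`, for any `h̃ ≥ 3h`, where `h` is the grid size
(maximal gap) of the original breakpoint vector. -/
theorem stmt_0 (n : ℕ) (ζ : Fin (n + 1) → ℝ) (hmono : StrictMono ζ)
    (hfirst : ζ 0 = 0) (hlast : ζ (Fin.last n) = 1) (h : ℝ)
    (hgrid : IsGreatest (Set.range fun i : Fin n => ζ i.succ - ζ i.castSucc) h)
    (ht : ℝ) (hht : 3 * h ≤ ht) :
    ∃ (m : ℕ) (σ : Fin (m + 1) → Fin (n + 1)), StrictMono σ ∧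
      σ 0 = 0 ∧ σ (Fin.last m) = Fin.last n ∧
      ∀ i : Fin m,
        min 1 (ht / 3) ≤ ζ (σ i.succ) - ζ (σ i.castSucc) ∧
        ζ (σ i.succ) - ζ (σ i.castSucc) ≤ ht := by
  obtain ⟨i0, hi0⟩ := hgrid.1
  have hn : 0 < n := i0.pos
  have hhpos : 0 < h := by
    rw [← hi0]; exact sub_pos.mpr (hmono (Fin.castSucc_lt_succ (i := i0)))
  have hhtpos : 0 < ht := by linarith
  by_cases hone : 1 ≤ ht
  · -- single jump 0 → 1
    refine ⟨1, ![0, Fin.last n], ?_, rfl, rfl, ?_⟩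
    · rw [Fin.strictMono_iff_lt_succ]
      intro i
      rw [Subsingleton.elim i 0]
      simp only [Fin.castSucc_zero, Fin.succ_zero_eq_one, Matrix.cons_val_zero,
        Matrix.cons_val_one, Matrix.head_cons]
      exact Fin.lt_def.mpr (by simpa using hn)
    · intro i
      rw [Subsingleton.elim i 0]
      simp only [Fin.castSucc_zero, Fin.succ_zero_eq_one, Matrix.cons_val_zero,
        Matrix.cons_val_one, Matrix.head_cons, hfirst, hlast, sub_zero]
      exact ⟨min_le_left _ _, hone⟩
  · push_neg at hone
    have hmin : min 1 (ht/3) = ht/3 := min_eq_right (by linarith)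
    set ζ' : ℕ → ℝ := fun i => ζ ⟨min i n, Nat.lt_succ_of_le (min_le_right _ _)⟩ with hζ'
    have hζ'eq : ∀ i, (hi : i ≤ n) → ζ' i = ζ ⟨i, Nat.lt_succ_of_le hi⟩ := by
      intro i hi
      simp only [hζ', min_eq_left hi]
    obtain ⟨m, σ, hσmono, hσ0, hσlast, hσgap⟩ := aux_coarsen ht hhtpos ζ' n 0
      (by
        intro i _ hi
        rw [Nat.zero_add] at hi
        rw [hζ'eq i (by omega), hζ'eq (i+1) (by omega)]
        constructor
        · exact hmono (Fin.mk_lt_mk.mpr (by omega))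
        · refine le_trans ?_ (by linarith : h ≤ ht/3)
          exact hgrid.2 ⟨⟨i, hi⟩, rfl⟩)
      (by
        rw [Nat.zero_add, hζ'eq n le_rfl, hζ'eq 0 (by omega)]
        have e1 : (⟨n, Nat.lt_succ_of_le le_rfl⟩ : Fin (n+1)) = Fin.last n := rfl
        have e2 : (⟨0, Nat.lt_succ_of_le (by omega)⟩ : Fin (n+1)) = 0 := rfl
        rw [e1, e2, hfirst, hlast, sub_zero]
        linarith)
    rw [Nat.zero_add] at hσlast
    have hσle : ∀ i, σ i ≤ n := by
      intro i
      have := hσmono.monotone (Fin.le_last i)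
      rw [hσlast] at this
      exact this
    refine ⟨m, fun i => ⟨σ i, Nat.lt_succ_of_le (hσle i)⟩, ?_, ?_, ?_, ?_⟩
    · intro i j hij
      exact Fin.mk_lt_mk.mpr (hσmono hij)
    · ext
      simp [hσ0]
    · ext
      simp [hσlast]
    · intro i
      have e1 := hζ'eq (σ i.succ) (hσle _)
      have e2 := hζ'eq (σ i.castSucc) (hσle _)
      have hg := hσgap i
      rw [e1, e2] at hg
      rw [hmin]
      exact hg
end

section
/- Let $H$ be a Hilbert space with closed nested subspaces $\{0\}=W_0 \subseteq W_1 \subseteq \cdots \subseteq W_{M}$, let $Q_\ell$ denote the orthogonal projection onto $W_\ell$, and let $h_\ell = 4^{M-\ell} h$ for some $h>0$. Then there is an absolute constant $c>0$ such that for every $w \in W_M$ and every decomposition $w = \sum_{\ell=1}^{M} w_\ell$ with $w_\ell \in W_\ell$: $\sum_{n=1}^{M} h_n^{-2} \|(Q_n - Q_{n-1}) w\|_H^2 \le c \sum_{\ell=1}^{M} h_\ell^{-2} \|w_\ell\|_H^2$. -/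
lemma geom_bound (N : ℕ) : ∑ k ∈ Finset.range N, ((4:ℝ)⁻¹)^k ≤ 4/3 := by
  rw [geom_sum_eq (by norm_num)]
  rw [div_le_iff_of_neg (by norm_num)]
  have : (0:ℝ) ≤ (4:ℝ)⁻¹ ^ N := by positivity
  linarith

lemma geom_bound_Icc (n M : ℕ) : ∑ ℓ ∈ Finset.Icc n M, ((4:ℝ)⁻¹)^(ℓ - n) ≤ 4/3 := by
  rw [show Finset.Icc n M = Finset.Ico n (M+1) by rw [Finset.Ico_add_one_right_eq_Icc],
      Finset.sum_Ico_eq_sum_range]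
  have : ∀ i, ((4:ℝ)⁻¹)^(n + i - n) = ((4:ℝ)⁻¹)^i := by intro i; congr 1; omega
  simp_rw [this]
  exact geom_bound _

lemma geom_bound_Icc' (ℓ : ℕ) : ∑ n ∈ Finset.Icc 1 ℓ, ((4:ℝ)⁻¹)^(ℓ - n) ≤ 4/3 := by
  rw [show Finset.Icc 1 ℓ = Finset.Ico 1 (ℓ+1) by rw [Finset.Ico_add_one_right_eq_Icc],
      Finset.sum_Ico_eq_sum_range]
  simp only [Nat.add_sub_cancel_left, show ℓ + 1 - 1 = ℓ from rfl]
  have : ∀ i, ((4:ℝ)⁻¹)^(ℓ - (1 + i)) = ((4:ℝ)⁻¹)^(ℓ - 1 - i) := by intro i; congr 1; omega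
  simp_rw [this]
  rw [Finset.sum_range_reflect (fun j => ((4:ℝ)⁻¹)^j) ℓ]
  exact geom_bound _

lemma cs_step (n M : ℕ) (a : ℕ → ℝ) (ha : ∀ ℓ, 0 ≤ a ℓ) :
    (∑ ℓ ∈ Finset.Icc n M, a ℓ)^2 ≤
      (4/3) * ∑ ℓ ∈ Finset.Icc n M, (4:ℝ)^(ℓ-n) * a ℓ^2 := by
  have hcs := Finset.sum_mul_sq_le_sq_mul_sq (Finset.Icc n M)
    (fun ℓ => ((2:ℝ)⁻¹)^(ℓ-n)) (fun ℓ => (2:ℝ)^(ℓ-n) * a ℓ)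
  have h1 : ∀ ℓ ∈ Finset.Icc n M,
      ((2:ℝ)⁻¹)^(ℓ-n) * ((2:ℝ)^(ℓ-n) * a ℓ) = a ℓ := by
    intro ℓ _
    rw [← mul_assoc, ← mul_pow]
    norm_num
  rw [Finset.sum_congr rfl h1] at hcs
  have h2 : ∀ ℓ ∈ Finset.Icc n M,
      (((2:ℝ)⁻¹)^(ℓ-n))^2 = ((4:ℝ)⁻¹)^(ℓ-n) := by
    intro ℓ _
    rw [← pow_mul, mul_comm, pow_mul]
    norm_num
  have h3 : ∀ ℓ ∈ Finset.Icc n M,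
      ((2:ℝ)^(ℓ-n) * a ℓ)^2 = (4:ℝ)^(ℓ-n) * a ℓ^2 := by
    intro ℓ _
    rw [mul_pow, ← pow_mul, mul_comm (ℓ-n) 2, pow_mul]
    norm_num
  rw [Finset.sum_congr rfl h2, Finset.sum_congr rfl h3] at hcs
  have hg : ∑ ℓ ∈ Finset.Icc n M, ((4:ℝ)⁻¹)^(ℓ - n) ≤ 4/3 := geom_bound_Icc n M
  have hpos : 0 ≤ ∑ ℓ ∈ Finset.Icc n M, (4:ℝ)^(ℓ-n) * a ℓ^2 :=
    Finset.sum_nonneg fun ℓ _ => by positivity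
  calc (∑ ℓ ∈ Finset.Icc n M, a ℓ)^2
      ≤ (∑ ℓ ∈ Finset.Icc n M, ((4:ℝ)⁻¹)^(ℓ-n)) * ∑ ℓ ∈ Finset.Icc n M, (4:ℝ)^(ℓ-n) * a ℓ^2 := hcs
    _ ≤ (4/3) * ∑ ℓ ∈ Finset.Icc n M, (4:ℝ)^(ℓ-n) * a ℓ^2 := by
        apply mul_le_mul_of_nonneg_right hg hpos

lemma weight_id (M n ℓ : ℕ) (h : ℝ) (hh : h ≠ 0) (hn : n ≤ ℓ) (hl : ℓ ≤ M) :
    (((4:ℝ)^(M-n)*h)^2)⁻¹ * (4:ℝ)^(ℓ-n) =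
      (((4:ℝ)^(M-ℓ)*h)^2)⁻¹ * ((4:ℝ)⁻¹)^(ℓ-n) := by
  have hMn : M - n = (M-ℓ) + (ℓ-n) := by omega
  rw [hMn, pow_add, inv_pow]
  have hA : (4:ℝ)^(M-ℓ) ≠ 0 := by positivity
  have hB : (4:ℝ)^(ℓ-n) ≠ 0 := by positivity
  field_simp

lemma arith (M : ℕ) (h : ℝ) (hh : 0 < h) (a b : ℕ → ℝ) (ha : ∀ ℓ, 0 ≤ a ℓ)
    (hb0 : ∀ n, 0 ≤ b n)
    (hb : ∀ n ∈ Finset.Icc 1 M, b n ≤ 2 * ∑ ℓ ∈ Finset.Icc n M, a ℓ) :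
    ∑ n ∈ Finset.Icc 1 M, (((4:ℝ)^(M-n)*h)^2)⁻¹ * b n ^2 ≤
      8 * ∑ ℓ ∈ Finset.Icc 1 M, (((4:ℝ)^(M-ℓ)*h)^2)⁻¹ * a ℓ^2 := by
  set Wt : ℕ → ℝ := fun n => (((4:ℝ)^(M-n)*h)^2)⁻¹ with hWt
  have hWpos : ∀ n, 0 ≤ Wt n := fun n => by positivity
  have step1 : ∀ n ∈ Finset.Icc 1 M, Wt n * b n ^ 2 ≤
      (16/3) * ∑ ℓ ∈ Finset.Icc n M, Wt ℓ * ((4:ℝ)⁻¹)^(ℓ-n) * a ℓ^2 := by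
    intro n hn
    rw [Finset.mem_Icc] at hn
    have hbn := hb n (Finset.mem_Icc.mpr hn)
    have h1 : b n ^ 2 ≤ 4 * (∑ ℓ ∈ Finset.Icc n M, a ℓ)^2 := by
      have hs : 0 ≤ ∑ ℓ ∈ Finset.Icc n M, a ℓ := Finset.sum_nonneg fun ℓ _ => ha ℓ
      nlinarith [hb0 n]
    have h2 := cs_step n M a ha
    have h3 : Wt n * b n ^ 2 ≤ Wt n * ((16/3) * ∑ ℓ ∈ Finset.Icc n M, (4:ℝ)^(ℓ-n) * a ℓ^2) := by
      apply mul_le_mul_of_nonneg_left _ (hWpos n)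
      linarith
    refine h3.trans_eq ?_
    rw [mul_left_comm]
    congr 1
    rw [Finset.mul_sum]
    refine Finset.sum_congr rfl fun ℓ hℓ => ?_
    rw [Finset.mem_Icc] at hℓ
    have hid := weight_id M n ℓ h hh.ne' hℓ.1 hℓ.2
    rw [← mul_assoc, hid]
  calc ∑ n ∈ Finset.Icc 1 M, Wt n * b n ^2
      ≤ ∑ n ∈ Finset.Icc 1 M, (16/3) * ∑ ℓ ∈ Finset.Icc n M, Wt ℓ * ((4:ℝ)⁻¹)^(ℓ-n) * a ℓ^2 :=
        Finset.sum_le_sum step1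
    _ = (16/3) * ∑ n ∈ Finset.Icc 1 M, ∑ ℓ ∈ Finset.Icc n M, Wt ℓ * ((4:ℝ)⁻¹)^(ℓ-n) * a ℓ^2 := by
        rw [Finset.mul_sum]
    _ = (16/3) * ∑ ℓ ∈ Finset.Icc 1 M, ∑ n ∈ Finset.Icc 1 ℓ, Wt ℓ * ((4:ℝ)⁻¹)^(ℓ-n) * a ℓ^2 := by
        congr 1
        refine Finset.sum_comm' ?_
        intro n ℓ
        simp only [Finset.mem_Icc]
        omega
    _ ≤ (16/3) * ∑ ℓ ∈ Finset.Icc 1 M, Wt ℓ * a ℓ^2 * (4/3) := by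
        apply mul_le_mul_of_nonneg_left _ (by norm_num)
        apply Finset.sum_le_sum
        intro ℓ _
        have : ∑ n ∈ Finset.Icc 1 ℓ, Wt ℓ * ((4:ℝ)⁻¹)^(ℓ-n) * a ℓ^2
            = (Wt ℓ * a ℓ^2) * ∑ n ∈ Finset.Icc 1 ℓ, ((4:ℝ)⁻¹)^(ℓ-n) := by
          rw [Finset.mul_sum]; apply Finset.sum_congr rfl; intro n _; ring
        rw [this]
        have := geom_bound_Icc' ℓ
        have hnn : 0 ≤ Wt ℓ * a ℓ^2 := by positivity
        nlinarith
    _ ≤ 8 * ∑ ℓ ∈ Finset.Icc 1 M, Wt ℓ * a ℓ^2 := by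
        have : ∑ ℓ ∈ Finset.Icc 1 M, Wt ℓ * a ℓ^2 * (4/3)
            = (4/3) * ∑ ℓ ∈ Finset.Icc 1 M, Wt ℓ * a ℓ^2 := by
          rw [Finset.mul_sum]; apply Finset.sum_congr rfl; intro ℓ _; ring
        rw [this, ← mul_assoc]
        apply mul_le_mul_of_nonneg_right (by norm_num)
        exact Finset.sum_nonneg fun ℓ _ => by positivity

open RealInnerProductSpace

/-- the orthogonal multilevel decomposition almost minimizes the
weighted sum over all decompositions, with an absolute constant. -/
theorem stmt_7 : ∃ c : ℝ, 0 < c ∧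
    ∀ (H : Type) [NormedAddCommGroup H] [InnerProductSpace ℝ H]
      (M : ℕ) (W : ℕ → Submodule ℝ H),
      (∀ n, IsClosed (W n : Set H)) → W 0 = ⊥ →
      (∀ n < M, W n ≤ W (n + 1)) →
      ∀ (Q : ℕ → H →L[ℝ] H),
      (∀ n ≤ M, ∀ x : H, Q n x ∈ W n ∧ x - Q n x ∈ (W n)ᗮ) →
      ∀ h : ℝ, 0 < h →
      ∀ w ∈ W M, ∀ wl : ℕ → H,
        (∀ ℓ ∈ Finset.Icc 1 M, wl ℓ ∈ W ℓ) →
        w = ∑ ℓ ∈ Finset.Icc 1 M, wl ℓ →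
        ∑ n ∈ Finset.Icc 1 M, (((4:ℝ) ^ (M - n) * h) ^ 2)⁻¹ * ‖Q n w - Q (n - 1) w‖ ^ 2 ≤
          c * ∑ ℓ ∈ Finset.Icc 1 M, (((4:ℝ) ^ (M - ℓ) * h) ^ 2)⁻¹ * ‖wl ℓ‖ ^ 2 := by
  refine ⟨8, by norm_num, ?_⟩
  intro H _ _ M W hclosed hW0 hnest Q hQ h hh w hw wl hwl hdecomp
  -- monotonicity of the chain
  have hmono : ∀ i j, i ≤ j → j ≤ M → W i ≤ W j := by
    intro i j hij hjM
    have key : ∀ k, i + k ≤ M → W i ≤ W (i + k) := by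
      intro k
      induction k with
      | zero => intro _; exact le_refl _
      | succ k ih =>
          intro hk
          exact (ih (by omega)).trans (hnest (i + k) (by omega))
    have := key (j - i) (by omega)
    rwa [Nat.add_sub_cancel' hij] at this
  -- Q n fixes elements of W n
  have hfix : ∀ n ≤ M, ∀ x ∈ W n, Q n x = x := by
    intro n hn x hx
    obtain ⟨h1, h2⟩ := hQ n hn x
    have hmem : Q n x - x ∈ W n := Submodule.sub_mem _ h1 hx
    have hmem' : Q n x - x ∈ (W n)ᗮ := by
      have := Submodule.neg_mem _ h2
      rwa [neg_sub] at this
    have hz : ⟪Q n x - x, Q n x - x⟫ = (0:ℝ) :=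
      (Submodule.mem_orthogonal _ _).mp hmem' _ hmem
    have := inner_self_eq_zero.mp hz
    exact sub_eq_zero.mp this
  -- Q n is norm-nonincreasing
  have hnorm : ∀ n ≤ M, ∀ x : H, ‖Q n x‖ ≤ ‖x‖ := by
    intro n hn x
    obtain ⟨h1, h2⟩ := hQ n hn x
    have horth : ⟪Q n x, x - Q n x⟫ = (0:ℝ) :=
      (Submodule.mem_orthogonal _ _).mp h2 _ h1
    have hpy : ‖x‖^2 = ‖Q n x‖^2 + ‖x - Q n x‖^2 := by
      have hx : x = Q n x + (x - Q n x) := by abel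
      calc ‖x‖^2 = ‖Q n x + (x - Q n x)‖^2 := by rw [← hx]
        _ = ‖Q n x‖^2 + 2 * ⟪Q n x, x - Q n x⟫ + ‖x - Q n x‖^2 := norm_add_sq_real _ _
        _ = ‖Q n x‖^2 + ‖x - Q n x‖^2 := by rw [horth]; ring
    nlinarith [norm_nonneg (Q n x), norm_nonneg x, norm_nonneg (x - Q n x)]
  -- the key decomposition bound
  have key : ∀ n ∈ Finset.Icc 1 M,
      ‖Q n w - Q (n-1) w‖ ≤ 2 * ∑ ℓ ∈ Finset.Icc n M, ‖wl ℓ‖ := by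
    intro n hn
    rw [Finset.mem_Icc] at hn
    have hset : Finset.Icc 1 M = Finset.Icc 1 (n-1) ∪ Finset.Icc n M := by
      ext x; simp only [Finset.mem_Icc, Finset.mem_union]; omega
    have hdisj : Disjoint (Finset.Icc 1 (n-1)) (Finset.Icc n M) := by
      rw [Finset.disjoint_left]
      intro x hx hx'
      rw [Finset.mem_Icc] at hx hx'
      omega
    have hrepr : Q n w - Q (n-1) w
        = ∑ ℓ ∈ Finset.Icc n M, (Q n (wl ℓ) - Q (n-1) (wl ℓ)) := by
      rw [hdecomp, map_sum, map_sum, ← Finset.sum_sub_distrib, hset,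
          Finset.sum_union hdisj]
      have hzero : ∑ ℓ ∈ Finset.Icc 1 (n-1), (Q n (wl ℓ) - Q (n-1) (wl ℓ)) = 0 := by
        apply Finset.sum_eq_zero
        intro ℓ hℓ
        rw [Finset.mem_Icc] at hℓ
        have hmem : wl ℓ ∈ W ℓ := hwl ℓ (Finset.mem_Icc.mpr ⟨hℓ.1, by omega⟩)
        have hm1 : wl ℓ ∈ W (n-1) := hmono ℓ (n-1) (by omega) (by omega) hmem
        have hm2 : wl ℓ ∈ W n := hmono ℓ n (by omega) hn.2 hmem
        rw [hfix n hn.2 _ hm2, hfix (n-1) (by omega) _ hm1, sub_self]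
      rw [hzero, zero_add]
    rw [hrepr]
    calc ‖∑ ℓ ∈ Finset.Icc n M, (Q n (wl ℓ) - Q (n-1) (wl ℓ))‖
        ≤ ∑ ℓ ∈ Finset.Icc n M, ‖Q n (wl ℓ) - Q (n-1) (wl ℓ)‖ := norm_sum_le _ _
      _ ≤ ∑ ℓ ∈ Finset.Icc n M, 2 * ‖wl ℓ‖ := by
          apply Finset.sum_le_sum
          intro ℓ _
          calc ‖Q n (wl ℓ) - Q (n-1) (wl ℓ)‖
              ≤ ‖Q n (wl ℓ)‖ + ‖Q (n-1) (wl ℓ)‖ := norm_sub_le _ _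
            _ ≤ ‖wl ℓ‖ + ‖wl ℓ‖ := add_le_add (hnorm n hn.2 _) (hnorm (n-1) (by omega) _)
            _ = 2 * ‖wl ℓ‖ := by ring
      _ = 2 * ∑ ℓ ∈ Finset.Icc n M, ‖wl ℓ‖ := (Finset.mul_sum _ _ _).symm
  exact arith M h hh (fun ℓ => ‖wl ℓ‖) (fun n => ‖Q n w - Q (n-1) w‖)
    (fun ℓ => norm_nonneg _) (fun n => norm_nonneg _) key
end

section
/- Let $u \in H^1(\widehat\Omega)$ on $\widehat\Omega = (0,1)^2$ be continuous, let $x \in [0,1/2]^2$, and for $r > 0$ let $C_r(x) := \{\xi \in \mathbb{R}^2 : \|\xi - x\|_2 \le r,\ \xi_1 \ge x_1,\ \xi_2 \ge x_2\}$ be the quarter-cone at $x$. Suppose $u$ is continuously differentiable on $C_{1/2}(x)$. Then for every $\epsilon \in (0, 1/4)$: $u(x)^2 \le c\Big(\|u\|_{L_2(C_{1/2}(x)\setminus C_{1/4}(x))}^2 + \epsilon^2 \|\nabla u\|_{L_\infty(C_\epsilon(x))}^2 + (-\log\epsilon)\, |u|_{H^1(C_{1/2}(x))}^2\Big)$ for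 an absolute constant $c > 0$. -/
open MeasureTheory

/-- The quarter-cone `C_r(x)` with vertex `x`. -/
def quarterCone (x : EuclideanSpace ℝ (Fin 2)) (r : ℝ) : Set (EuclideanSpace ℝ (Fin 2)) :=
  {ξ | ‖ξ - x‖ ≤ r ∧ x 0 ≤ ξ 0 ∧ x 1 ≤ ξ 1}

open Real Set
open scoped ENNReal

noncomputable section

/-- unit direction vector -/
def dirE (θ : ℝ) : EuclideanSpace ℝ (Fin 2) :=
  (WithLp.equiv 2 (Fin 2 → ℝ)).symm ![Real.cos θ, Real.sin θ]

/-- point at polar coordinates (p.1, p.2) around x -/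
def ptE (x : EuclideanSpace ℝ (Fin 2)) (p : ℝ × ℝ) : EuclideanSpace ℝ (Fin 2) :=
  x + p.1 • dirE p.2

@[simp] lemma dirE_apply0 (θ : ℝ) : dirE θ 0 = Real.cos θ := rfl
@[simp] lemma dirE_apply1 (θ : ℝ) : dirE θ 1 = Real.sin θ := rfl

lemma norm_dirE (θ : ℝ) : ‖dirE θ‖ = 1 := by
  rw [EuclideanSpace.norm_eq]
  simp [Fin.sum_univ_two, sq_abs, Real.cos_sq_add_sin_sq]

@[simp] lemma ptE_apply0 (x : EuclideanSpace ℝ (Fin 2)) (p : ℝ × ℝ) :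
    ptE x p 0 = x 0 + p.1 * Real.cos p.2 := rfl
@[simp] lemma ptE_apply1 (x : EuclideanSpace ℝ (Fin 2)) (p : ℝ × ℝ) :
    ptE x p 1 = x 1 + p.1 * Real.sin p.2 := rfl


lemma norm_ptE_sub (x : EuclideanSpace ℝ (Fin 2)) (p : ℝ × ℝ) :
    ‖ptE x p - x‖ = |p.1| := by
  have : ptE x p - x = p.1 • dirE p.2 := by simp [ptE]
  rw [this, norm_smul, norm_dirE, Real.norm_eq_abs, mul_one]

lemma ptE_mem_quarterCone {x : EuclideanSpace ℝ (Fin 2)} {p : ℝ × ℝ} {r : ℝ}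
    (h0 : 0 ≤ p.1) (h1 : p.1 ≤ r) (hθ0 : 0 ≤ p.2) (hθ1 : p.2 ≤ π / 2) :
    ptE x p ∈ quarterCone x r := by
  refine ⟨?_, ?_, ?_⟩
  · rw [norm_ptE_sub, abs_of_nonneg h0]; exact h1
  · rw [ptE_apply0]
    nlinarith [Real.cos_nonneg_of_mem_Icc (show p.2 ∈ Icc (-(π/2)) (π/2) from ⟨by linarith [Real.pi_pos], hθ1⟩)]
  · rw [ptE_apply1]
    nlinarith [Real.sin_nonneg_of_nonneg_of_le_pi hθ0 (by linarith [Real.pi_pos] : p.2 ≤ π)]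

lemma continuous_dirE : Continuous dirE := by
  have : Continuous fun θ : ℝ => (![Real.cos θ, Real.sin θ] : Fin 2 → ℝ) := by
    apply continuous_pi
    intro i
    fin_cases i
    · simpa using Real.continuous_cos
    · simpa using Real.continuous_sin
  exact (PiLp.continuous_toLp 2 (fun _ : Fin 2 => ℝ)).comp this

lemma continuous_ptE (x : EuclideanSpace ℝ (Fin 2)) : Continuous (ptE x) :=
  continuous_const.add (continuous_fst.smul (continuous_dirE.comp continuous_snd))

lemma quarterCone_isClosed (x : EuclideanSpace ℝ (Fin 2)) (r : ℝ) :
    IsClosed (quarterCone x r) := by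
  have h0 : Continuous fun ξ : EuclideanSpace ℝ (Fin 2) => ξ 0 :=
    (continuous_apply (0 : Fin 2)).comp (PiLp.continuous_ofLp 2 (fun _ : Fin 2 => ℝ))
  have h1 : Continuous fun ξ : EuclideanSpace ℝ (Fin 2) => ξ 1 :=
    (continuous_apply (1 : Fin 2)).comp (PiLp.continuous_ofLp 2 (fun _ : Fin 2 => ℝ))
  have : quarterCone x r = (fun ξ => ‖ξ - x‖) ⁻¹' Iic r ∩
      ((fun ξ : EuclideanSpace ℝ (Fin 2) => ξ 0) ⁻¹' Ici (x 0) ∩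
       (fun ξ : EuclideanSpace ℝ (Fin 2) => ξ 1) ⁻¹' Ici (x 1)) := by
    ext ξ; simp [quarterCone]
  rw [this]
  exact (isClosed_Iic.preimage (continuous_id.sub continuous_const).norm).inter
    ((isClosed_Ici.preimage h0).inter (isClosed_Ici.preimage h1))

lemma quarterCone_isCompact (x : EuclideanSpace ℝ (Fin 2)) (r : ℝ) :
    IsCompact (quarterCone x r) := by
  apply Metric.isCompact_of_isClosed_isBounded (quarterCone_isClosed x r)
  have : quarterCone x r ⊆ Metric.closedBall x r := by
    intro ξ hξ
    simpa [Metric.mem_closedBall, dist_eq_norm] using hξ.1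
  exact (Metric.isBounded_closedBall).subset this

lemma quarterCone_measurableSet (x : EuclideanSpace ℝ (Fin 2)) (r : ℝ) :
    MeasurableSet (quarterCone x r) := (quarterCone_isClosed x r).measurableSet

lemma quarterCone_mono (x : EuclideanSpace ℝ (Fin 2)) {r r' : ℝ} (h : r ≤ r') :
    quarterCone x r ⊆ quarterCone x r' := fun ξ hξ => ⟨hξ.1.trans h, hξ.2.1, hξ.2.2⟩

end

noncomputable section

def phiE : EuclideanSpace ℝ (Fin 2) ≃ᵐ ℝ × ℝ :=
  (MeasurableEquiv.toLp 2 (Fin 2 → ℝ)).symm.trans MeasurableEquiv.finTwoArrow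

lemma phiE_mp : MeasurePreserving phiE volume volume :=
  (volume_preserving_finTwoArrow ℝ).comp (EuclideanSpace.volume_preserving_symm_measurableEquiv_toLp (Fin 2))

lemma cov (x : EuclideanSpace ℝ (Fin 2)) (f : EuclideanSpace ℝ (Fin 2) → ℝ≥0∞) {a b : ℝ}
    (ha : 0 < a) {T : Set (EuclideanSpace ℝ (Fin 2))} (hT : MeasurableSet T)
    (him : ∀ p ∈ Ioo a b ×ˢ Ioo 0 (π/2), ptE x p ∈ T) :
    ∫⁻ p in Ioo a b ×ˢ Ioo 0 (π/2), ENNReal.ofReal p.1 * f (ptE x p) ≤ ∫⁻ ξ in T, f ξ := by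
  set s : Set (ℝ × ℝ) := Ioo a b ×ˢ Ioo 0 (π/2) with hs_def
  have hs : MeasurableSet s := measurableSet_Ioo.prod measurableSet_Ioo
  set m : ℝ × ℝ → ℝ × ℝ := fun p => (x 0, x 1) + polarCoord.symm p with hm
  set B : ℝ × ℝ → ℝ × ℝ →L[ℝ] ℝ × ℝ := fun p =>
    LinearMap.toContinuousLinearMap (Matrix.toLin (Module.Basis.finTwoProd ℝ) (Module.Basis.finTwoProd ℝ)
      !![Real.cos p.2, -p.1 * Real.sin p.2; Real.sin p.2, p.1 * Real.cos p.2]) with hB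
  have hder : ∀ p ∈ s, HasFDerivWithinAt m (B p) s p := fun p _ =>
    ((hasFDerivAt_polarCoord_symm p).const_add _).hasFDerivWithinAt
  have hsub : s ⊆ polarCoord.target := by
    rintro ⟨r, θ⟩ ⟨hr, hθ⟩
    refine ⟨lt_trans ha hr.1, ?_, lt_trans hθ.2 (by linarith [Real.pi_pos])⟩
    have := Real.pi_pos
    simp only [mem_Ioo] at hθ ⊢
    linarith [hθ.1]
  have hinjpolar : InjOn (⇑polarCoord.symm) polarCoord.target := by
    simpa using polarCoord.symm.injOn
  have hinj : InjOn m s := by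
    intro p hp q hq h
    apply hinjpolar (hsub hp) (hsub hq)
    have := h
    simp only [hm] at this
    exact add_left_cancel this
  have hdet : ∀ p : ℝ × ℝ, (B p).det = p.1 := by
    intro p
    conv_rhs => rw [← one_mul p.1, ← Real.cos_sq_add_sin_sq p.2]
    simp only [hB, neg_mul, LinearMap.det_toContinuousLinearMap, LinearMap.det_toLin,
      Matrix.det_fin_two_of, sub_neg_eq_add]
    ring
  have hcomp : ∀ p : ℝ × ℝ, phiE.symm (m p) = ptE x p := by
    intro p
    ext i
    fin_cases i
    · show (m p).1 = x 0 + p.1 * Real.cos p.2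
      simp [hm, polarCoord_symm_apply]
    · show (m p).2 = x 1 + p.1 * Real.sin p.2
      simp [hm, polarCoord_symm_apply]
  have key := lintegral_image_eq_lintegral_abs_det_fderiv_mul volume hs hder hinj
    (fun q => f (phiE.symm q))
  calc ∫⁻ p in s, ENNReal.ofReal p.1 * f (ptE x p)
      = ∫⁻ p in s, ENNReal.ofReal |(B p).det| * f (phiE.symm (m p)) := by
        apply setLIntegral_congr_fun hs
        intro p hp
        dsimp only
        rw [hdet, hcomp, abs_of_pos (lt_trans ha hp.1.1)]
    _ = ∫⁻ q in m '' s, f (phiE.symm q) := key.symm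
    _ ≤ ∫⁻ q in phiE.symm ⁻¹' T, f (phiE.symm q) := by
        apply lintegral_mono_set
        rintro q ⟨p, hp, rfl⟩
        show phiE.symm (m p) ∈ T
        rw [hcomp]
        exact him p hp
    _ = ∫⁻ ξ in T, f ξ :=
        (phiE_mp.symm phiE).setLIntegral_comp_preimage_emb phiE.symm.measurableEmbedding f T

end

set_option maxHeartbeats 1000000
noncomputable section

lemma pw (u : EuclideanSpace ℝ (Fin 2) → ℝ) (x : EuclideanSpace ℝ (Fin 2))
    (hd : ∀ ξ ∈ quarterCone x (1/2), DifferentiableAt ℝ u ξ)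
    (hfd : ContinuousOn (fderiv ℝ u) (quarterCone x (1/2)))
    {ε r θ : ℝ} (hε0 : 0 < ε) (hε : ε < 1/4) (hr : r ∈ Ioo (1/4:ℝ) (1/2))
    (hθ : θ ∈ Ioo 0 (π/2)) :
    u x ^ 2 ≤ 3 * u (ptE x (r, θ)) ^ 2
      + 3 * ε ^ 2 * (⨆ ξ ∈ quarterCone x ε, ‖fderiv ℝ u ξ‖) ^ 2
      + 3 * (-Real.log ε) * ∫ ρ in Ioo ε (1/2 : ℝ), ρ * ‖fderiv ℝ u (ptE x (ρ, θ))‖ ^ 2 := by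
  have hθ0 : 0 ≤ θ := hθ.1.le
  have hθ2 : θ ≤ π / 2 := hθ.2.le
  have hεr : ε ≤ r := by linarith [hr.1]
  have hr0 : (0:ℝ) ≤ r := by linarith [hr.1]
  have hr12 : r ≤ 1/2 := hr.2.le
  have hε12 : ε ≤ 1/2 := by linarith
  set S := ⨆ ξ ∈ quarterCone x ε, ‖fderiv ℝ u ξ‖ with hS_def
  set γ : ℝ → EuclideanSpace ℝ (Fin 2) := fun ρ => ptE x (ρ, θ) with hγ_def
  set g : ℝ → (EuclideanSpace ℝ (Fin 2) →L[ℝ] ℝ) := fun ρ => fderiv ℝ u (γ ρ) with hg_def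
  set v' : ℝ → ℝ := fun ρ => g ρ (dirE θ) with hv'_def
  set K := -Real.log ε with hK_def
  set L : ℝ := ∫ ρ in Ioo ε (1/2:ℝ), ρ * ‖g ρ‖ ^ 2 with hL_def
  have hK : 0 < K := by
    have := Real.log_neg hε0 (by linarith)
    simp only [hK_def]; linarith
  have hγ_mem : ∀ ρ ∈ Icc (0:ℝ) (1/2), γ ρ ∈ quarterCone x (1/2) := fun ρ hρ =>
    ptE_mem_quarterCone hρ.1 hρ.2 hθ0 hθ2
  have hγ_cont : Continuous γ := (continuous_ptE x).comp (continuous_id.prodMk continuous_const)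
  have hg_cont : ContinuousOn g (Icc 0 (1/2)) :=
    hfd.comp hγ_cont.continuousOn (fun ρ hρ => hγ_mem ρ hρ)
  have hv'_cont : ContinuousOn v' (Icc 0 (1/2)) := hg_cont.clm_apply continuousOn_const
  have hv'_meas : Measurable v' := by
    have h1 : Measurable g := (measurable_fderiv ℝ u).comp hγ_cont.measurable
    exact (ContinuousLinearMap.apply ℝ ℝ (dirE θ)).continuous.measurable.comp h1
  have hderiv : ∀ ρ ∈ Icc (0:ℝ) (1/2), HasDerivAt (fun t => u (γ t)) (v' ρ) ρ := by
    intro ρ hρ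
    have h1 : HasDerivAt γ (dirE θ) ρ := by
      have h2 : HasDerivAt (fun t : ℝ => t • dirE θ) ((1:ℝ) • dirE θ) ρ :=
        (hasDerivAt_id ρ).smul_const _
      have h3 := h2.const_add x
      simpa [hγ_def, ptE] using h3
    exact (hd _ (hγ_mem ρ hρ)).hasFDerivAt.comp_hasDerivAt ρ h1
  have hII : ∀ a b : ℝ, 0 ≤ a → b ≤ 1/2 → a ≤ b → IntervalIntegrable v' volume a b := by
    intro a b h1 h2 h3
    apply ContinuousOn.intervalIntegrable
    rw [uIcc_of_le h3]
    exact hv'_cont.mono (Icc_subset_Icc h1 h2)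
  have hftc : ∫ t in (0:ℝ)..r, v' t = u (γ r) - u x := by
    have h0 : u (γ 0) = u x := by
      congr 1
      ext i
      fin_cases i <;> simp [hγ_def]
    rw [intervalIntegral.integral_eq_sub_of_hasDerivAt (f := fun t => u (γ t))
      (fun t ht => hderiv t (by rw [uIcc_of_le hr0] at ht; exact Icc_subset_Icc le_rfl hr12 ht))
      (hII 0 r le_rfl hr12 hr0), h0]
  have hsplit : ∫ t in (0:ℝ)..r, v' t = (∫ t in (0:ℝ)..ε, v' t) + ∫ t in ε..r, v' t :=
    (intervalIntegral.integral_add_adjacent_intervals (hII 0 ε le_rfl hε12 hε0.le)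
      (hII ε r hε0.le hr12 hεr)).symm
  -- bound on S piece
  have hSnn_cont : ContinuousOn (fun ξ => ‖fderiv ℝ u ξ‖) (quarterCone x ε) :=
    (hfd.mono (quarterCone_mono x (by linarith))).norm
  have hbdd : BddAbove ((fun ξ => ‖fderiv ℝ u ξ‖) '' quarterCone x ε) :=
    ((quarterCone_isCompact x ε).image_of_continuousOn hSnn_cont).bddAbove
  have hxmem : x ∈ quarterCone x ε := ⟨by simp [hε0.le], le_refl _, le_refl _⟩
  have hrange : BddAbove (Set.range fun ξ : quarterCone x ε => ‖fderiv ℝ u ξ‖) := by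
    have h := Set.image_eq_range (fun ξ => ‖fderiv ℝ u ξ‖) (quarterCone x ε)
    rw [← h]
    exact hbdd
  have h0 : sSup (∅ : Set ℝ) ≤ ⨆ i : quarterCone x ε, ‖fderiv ℝ u i‖ := by
    rw [Real.sSup_empty]
    exact le_trans (norm_nonneg (fderiv ℝ u x)) (le_ciSup_set hbdd hxmem)
  have hsubty := ciSup_subtype'' (f := fun ξ => ‖fderiv ℝ u ξ‖) hrange h0
  have hSle : ∀ ξ ∈ quarterCone x ε, ‖fderiv ℝ u ξ‖ ≤ S := fun ξ hξ =>
    (le_ciSup_set hbdd hξ).trans_eq hsubty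
  have hS0 : 0 ≤ S :=
    le_trans (norm_nonneg (fderiv ℝ u x)) (hSle x hxmem)
  have hI1 : |∫ t in (0:ℝ)..ε, v' t| ≤ S * ε := by
    have hb : ∀ t ∈ Set.uIoc (0:ℝ) ε, ‖v' t‖ ≤ S := by
      intro t ht
      rw [uIoc_of_le hε0.le] at ht
      have htm : γ t ∈ quarterCone x ε := ptE_mem_quarterCone ht.1.le ht.2 hθ0 hθ2
      calc ‖v' t‖ ≤ ‖g t‖ * ‖dirE θ‖ := (g t).le_opNorm _
        _ = ‖g t‖ := by rw [norm_dirE, mul_one]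
        _ ≤ S := hSle _ htm
    have := intervalIntegral.norm_integral_le_of_norm_le_const hb
    simpa [abs_of_nonneg hε0.le] using this
  -- integrability of the weighted square
  have hL_int : IntegrableOn (fun ρ => ρ * ‖g ρ‖ ^ 2) (Ioo ε (1/2:ℝ)) := by
    refine ((continuousOn_id.mul (((hg_cont.mono (Icc_subset_Icc hε0.le le_rfl)).norm).pow
      2)).integrableOn_compact isCompact_Icc).mono_set Ioo_subset_Icc_self
  have hL_nonneg : 0 ≤ L :=
    setIntegral_nonneg measurableSet_Ioo (fun ρ hρ => mul_nonneg (by linarith [hρ.1]) (sq_nonneg _))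
  -- Cauchy–Schwarz on [ε, r]
  have hI2 : |∫ t in ε..r, v' t| ≤ K ^ ((1:ℝ)/2) * L ^ ((1:ℝ)/2) := by
    have h1 : |∫ t in ε..r, v' t| ≤ ∫ t in ε..r, |v' t| := by
      simpa [Real.norm_eq_abs] using
        intervalIntegral.norm_integral_le_integral_norm (f := v') (μ := volume) hεr
    set μ := volume.restrict (Ioc ε r) with hμ_def
    set f1 : ℝ → ℝ := fun t => Real.sqrt t⁻¹ with hf1_def
    set f2 : ℝ → ℝ := fun t => Real.sqrt t * |v' t| with hf2_def
    have hae : ∀ᵐ t ∂μ, t ∈ Ioc ε r := ae_restrict_mem measurableSet_Ioc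
    have hconj : Real.HolderConjugate 2 2 := ⟨by norm_num, by norm_num, by norm_num⟩
    have hf1m : Measurable f1 := Real.continuous_sqrt.measurable.comp measurable_inv
    have hf2m : Measurable f2 := Real.continuous_sqrt.measurable.mul hv'_meas.abs
    have hIoc_sub : Ioc ε r ⊆ Icc ε r := Ioc_subset_Icc_self
    have hf1_mem : MemLp f1 (ENNReal.ofReal 2) μ := by
      rw [show ENNReal.ofReal (2:ℝ) = 2 by norm_num]
      rw [memLp_two_iff_integrable_sq hf1m.aestronglyMeasurable]
      have hint : IntegrableOn (fun t => t⁻¹) (Ioc ε r) := by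
        refine ((continuousOn_inv₀.mono ?_).integrableOn_compact isCompact_Icc).mono_set
          Ioc_subset_Icc_self
        intro t ht
        simp only [mem_compl_iff, mem_singleton_iff]
        exact (lt_of_lt_of_le hε0 ht.1).ne'
      refine hint.congr ?_
      filter_upwards [hae] with t ht
      have ht0 : 0 < t := hε0.trans ht.1
      rw [hf1_def]
      simp only
      rw [Real.sq_sqrt (inv_nonneg.2 ht0.le)]
    have hf2_mem : MemLp f2 (ENNReal.ofReal 2) μ := by
      rw [show ENNReal.ofReal (2:ℝ) = 2 by norm_num]
      rw [memLp_two_iff_integrable_sq hf2m.aestronglyMeasurable]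
      have hint : IntegrableOn (fun t => t * v' t ^ 2) (Ioc ε r) := by
        refine ((continuousOn_id.mul ((hv'_cont.mono ?_).pow 2)).integrableOn_compact
          isCompact_Icc).mono_set Ioc_subset_Icc_self
        exact Icc_subset_Icc hε0.le hr12
      refine hint.congr ?_
      filter_upwards [hae] with t ht
      have ht0 : 0 < t := hε0.trans ht.1
      rw [hf2_def]
      simp only
      rw [mul_pow, Real.sq_sqrt ht0.le, sq_abs]
    have hCS := integral_mul_le_Lp_mul_Lq_of_nonneg hconj
      (Filter.Eventually.of_forall fun t => Real.sqrt_nonneg _)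
      (Filter.Eventually.of_forall fun t => mul_nonneg (Real.sqrt_nonneg _) (abs_nonneg _))
      hf1_mem hf2_mem
    have hprod : ∫ t, |v' t| ∂μ = ∫ t, f1 t * f2 t ∂μ := by
      refine integral_congr_ae ?_
      filter_upwards [hae] with t ht
      have ht0 : 0 < t := hε0.trans ht.1
      rw [hf1_def, hf2_def]
      simp only
      rw [Real.sqrt_inv, ← mul_assoc, inv_mul_cancel₀ (Real.sqrt_pos.2 ht0).ne', one_mul]
    have hEq1 : ∫ t, f1 t ^ (2:ℝ) ∂μ ≤ K := by
      have he : ∫ t, f1 t ^ (2:ℝ) ∂μ = ∫ t in Ioc ε r, t⁻¹ := by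
        refine integral_congr_ae ?_
        filter_upwards [hae] with t ht
        have ht0 : 0 < t := hε0.trans ht.1
        rw [hf1_def]
        simp only
        rw [Real.rpow_two, Real.sq_sqrt (inv_nonneg.2 ht0.le)]
      rw [he, ← intervalIntegral.integral_of_le hεr, integral_inv_of_pos hε0 (by linarith : (0:ℝ) < r),
        Real.log_div (by linarith : r ≠ 0) hε0.ne']
      have : Real.log r < 0 := Real.log_neg (by linarith) (by linarith)
      simp only [hK_def]; linarith
    have hEq2 : ∫ t, f2 t ^ (2:ℝ) ∂μ ≤ L := by
      have he : ∫ t, f2 t ^ (2:ℝ) ∂μ = ∫ t in Ioc ε r, t * v' t ^ 2 := by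
        refine integral_congr_ae ?_
        filter_upwards [hae] with t ht
        have ht0 : 0 < t := hε0.trans ht.1
        rw [hf2_def]
        simp only
        rw [Real.rpow_two, mul_pow, Real.sq_sqrt ht0.le, sq_abs]
      rw [he]
      have hint1 : IntegrableOn (fun t => t * v' t ^ 2) (Ioc ε r) := by
        refine ((continuousOn_id.mul ((hv'_cont.mono (Icc_subset_Icc hε0.le hr12)).pow
          2)).integrableOn_compact isCompact_Icc).mono_set Ioc_subset_Icc_self
      have hint2 : IntegrableOn (fun t => t * ‖g t‖ ^ 2) (Ioc ε r) :=
        hL_int.mono_set (Ioc_subset_Ioo_right hr.2)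
      have step1 : ∫ t in Ioc ε r, t * v' t ^ 2 ≤ ∫ t in Ioc ε r, t * ‖g t‖ ^ 2 := by
        refine setIntegral_mono_on hint1 hint2 measurableSet_Ioc ?_
        intro t ht
        have hb : |v' t| ≤ ‖g t‖ := by
          calc |v' t| = ‖v' t‖ := (Real.norm_eq_abs _).symm
            _ ≤ ‖g t‖ * ‖dirE θ‖ := (g t).le_opNorm _
            _ = ‖g t‖ := by rw [norm_dirE, mul_one]
        have ht0 : 0 < t := hε0.trans ht.1
        have h2 : v' t ^ 2 ≤ ‖g t‖ ^ 2 := by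
          nlinarith [mul_self_le_mul_self (abs_nonneg (v' t)) hb, sq_abs (v' t)]
        exact mul_le_mul_of_nonneg_left h2 ht0.le
      have step2 : ∫ t in Ioc ε r, t * ‖g t‖ ^ 2 ≤ L := by
        refine setIntegral_mono_set hL_int ?_ ?_
        · filter_upwards [ae_restrict_mem measurableSet_Ioo] with t ht
          exact mul_nonneg (by linarith [ht.1]) (sq_nonneg _)
        · exact (HasSubset.Subset.eventuallyLE (Ioc_subset_Ioo_right hr.2))
      linarith
    have hpow : (∫ t, f1 t ^ (2:ℝ) ∂μ) ^ ((1:ℝ)/2) * (∫ t, f2 t ^ (2:ℝ) ∂μ) ^ ((1:ℝ)/2)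
        ≤ K ^ ((1:ℝ)/2) * L ^ ((1:ℝ)/2) := by
      have h1 : (0:ℝ) ≤ ∫ t, f1 t ^ (2:ℝ) ∂μ :=
        integral_nonneg fun t => Real.rpow_nonneg (Real.sqrt_nonneg _) _
      have h2 : (0:ℝ) ≤ ∫ t, f2 t ^ (2:ℝ) ∂μ :=
        integral_nonneg fun t => Real.rpow_nonneg (mul_nonneg (Real.sqrt_nonneg _) (abs_nonneg _)) _
      exact mul_le_mul (Real.rpow_le_rpow h1 hEq1 (by norm_num))
        (Real.rpow_le_rpow h2 hEq2 (by norm_num)) (Real.rpow_nonneg h2 _)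
        (Real.rpow_nonneg hK.le _)
    calc |∫ t in ε..r, v' t| ≤ ∫ t in ε..r, |v' t| := h1
      _ = ∫ t, |v' t| ∂μ := intervalIntegral.integral_of_le hεr
      _ = ∫ t, f1 t * f2 t ∂μ := hprod
      _ ≤ (∫ t, f1 t ^ (2:ℝ) ∂μ) ^ ((1:ℝ)/2) * (∫ t, f2 t ^ (2:ℝ) ∂μ) ^ ((1:ℝ)/2) := hCS
      _ ≤ K ^ ((1:ℝ)/2) * L ^ ((1:ℝ)/2) := hpow
  -- combine
  have hux : u x = u (γ r) - ((∫ t in (0:ℝ)..ε, v' t) + ∫ t in ε..r, v' t) := by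
    rw [← hsplit, hftc]; ring
  have habs : |u x| ≤ |u (γ r)| + (S * ε + K ^ ((1:ℝ)/2) * L ^ ((1:ℝ)/2)) := by
    rw [hux]
    refine le_trans (abs_sub _ _) ?_
    gcongr
    refine le_trans (abs_add_le _ _) ?_
    gcongr
  have hKsq : (K ^ ((1:ℝ)/2)) ^ 2 = K := by
    rw [← Real.rpow_natCast (K ^ ((1:ℝ)/2)) 2, ← Real.rpow_mul hK.le]
    norm_num
  have hLsq : (L ^ ((1:ℝ)/2)) ^ 2 = L := by
    rw [← Real.rpow_natCast (L ^ ((1:ℝ)/2)) 2, ← Real.rpow_mul hL_nonneg]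
    norm_num
  show u x ^ 2 ≤ 3 * u (γ r) ^ 2 + 3 * ε ^ 2 * S ^ 2 + 3 * K * L
  set a := |u (γ r)| with ha_def
  set b := S * ε with hb_def
  set c := K ^ ((1:ℝ)/2) * L ^ ((1:ℝ)/2) with hc_def
  have ha0 : 0 ≤ a := abs_nonneg _
  have hb0 : 0 ≤ b := mul_nonneg hS0 hε0.le
  have hc0 : 0 ≤ c := mul_nonneg (Real.rpow_nonneg hK.le _) (Real.rpow_nonneg hL_nonneg _)
  have hsq1 : u x ^ 2 ≤ (a + b + c) ^ 2 := by
    have := habs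
    nlinarith [abs_nonneg (u x), sq_abs (u x)]
  have hc2 : c ^ 2 = K * L := by
    rw [hc_def, mul_pow, hKsq, hLsq]
  have ha2 : a ^ 2 = u (γ r) ^ 2 := sq_abs _
  have hb2 : b ^ 2 = ε ^ 2 * S ^ 2 := by rw [hb_def]; ring
  nlinarith [sq_nonneg (a - b), sq_nonneg (a - c), sq_nonneg (b - c)]

end

set_option maxHeartbeats 1000000 in
/-- point-evaluation estimate via the cone argument:
`u(x)² ≤ c (‖u‖²_{L₂(C_{1/2}\C_{1/4})} + ε² ‖∇u‖²_{L∞(C_ε)} + (-log ε)|u|²_{H¹(C_{1/2})})`. -/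
theorem stmt_14 : ∃ c : ℝ, 0 < c ∧
    ∀ (u : EuclideanSpace ℝ (Fin 2) → ℝ) (x : EuclideanSpace ℝ (Fin 2)),
      x 0 ∈ Set.Icc (0:ℝ) (1/2) → x 1 ∈ Set.Icc (0:ℝ) (1/2) →
      Continuous u →
      (∀ ξ ∈ quarterCone x (1/2), DifferentiableAt ℝ u ξ) →
      ContinuousOn (fderiv ℝ u) (quarterCone x (1/2)) →
      IntegrableOn (fun ξ => ‖fderiv ℝ u ξ‖ ^ 2) (quarterCone x (1/2)) →
      ∀ ε : ℝ, 0 < ε → ε < 1/4 →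
        (u x) ^ 2 ≤ c *
          ((∫ ξ in quarterCone x (1/2) \ quarterCone x (1/4), (u ξ) ^ 2) +
           ε ^ 2 * (⨆ ξ ∈ quarterCone x ε, ‖fderiv ℝ u ξ‖) ^ 2 +
           (-Real.log ε) * ∫ ξ in quarterCone x (1/2), ‖fderiv ℝ u ξ‖ ^ 2) := by
  refine ⟨100, by norm_num, ?_⟩
  intro u x _ _ hu hd hfd hD2 ε hε0 hε
  set S := ⨆ ξ ∈ quarterCone x ε, ‖fderiv ℝ u ξ‖ with hS_def
  set K := -Real.log ε with hK_def
  have hK : 0 < K := by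
    have := Real.log_neg hε0 (by linarith)
    simp only [hK_def]; linarith
  set A := ∫ ξ in quarterCone x (1/2) \ quarterCone x (1/4), u ξ ^ 2 with hA_def
  set D := ∫ ξ in quarterCone x (1/2), ‖fderiv ℝ u ξ‖ ^ 2 with hD_def
  have hA0 : 0 ≤ A := setIntegral_nonneg
    ((quarterCone_measurableSet x _).diff (quarterCone_measurableSet x _)) (fun ξ _ => sq_nonneg _)
  have hD0 : 0 ≤ D := setIntegral_nonneg (quarterCone_measurableSet x _) (fun ξ _ => sq_nonneg _)
  set L : ℝ → ℝ := fun θ => ∫ ρ in Ioo ε (1/2:ℝ), ρ * ‖fderiv ℝ u (ptE x (ρ, θ))‖ ^ 2 with hL_def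
  set Q : Set (ℝ × ℝ) := Ioo (1/4:ℝ) (1/2) ×ˢ Ioo 0 (π/2) with hQ_def
  have hQm : MeasurableSet Q := measurableSet_Ioo.prod measurableSet_Ioo
  have hπ := Real.pi_pos
  have hnormsq_meas : Measurable fun ξ : EuclideanSpace ℝ (Fin 2) => ‖fderiv ℝ u ξ‖ ^ 2 :=
    (measurable_fderiv ℝ u).norm.pow_const 2
  set F : ℝ × ℝ → ℝ≥0∞ :=
    fun p => ENNReal.ofReal p.1 * ENNReal.ofReal (‖fderiv ℝ u (ptE x p)‖ ^ 2) with hF_def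
  have hF_meas : Measurable F :=
    (ENNReal.measurable_ofReal.comp measurable_fst).mul
      (ENNReal.measurable_ofReal.comp (hnormsq_meas.comp (continuous_ptE x).measurable))
  set G : ℝ → ℝ≥0∞ := fun θ => ∫⁻ ρ in Ioo ε (1/2:ℝ), F (ρ, θ) with hG_def
  have hG_meas : Measurable G := by
    have h1 : Measurable fun q : ℝ × ℝ => F (q.2, q.1) :=
      hF_meas.comp (measurable_snd.prodMk measurable_fst)
    exact h1.lintegral_prod_right'
  -- conversions between Bochner and lower integrals
  have hu2_int : IntegrableOn (fun ξ => u ξ ^ 2) (quarterCone x (1/2)) :=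
    (hu.pow 2).continuousOn.integrableOn_compact (quarterCone_isCompact x _)
  have hAconv : ∫⁻ ξ in quarterCone x (1/2) \ quarterCone x (1/4), ENNReal.ofReal (u ξ ^ 2)
      = ENNReal.ofReal A :=
    (ofReal_integral_eq_lintegral_ofReal (hu2_int.mono_set diff_subset)
      (Filter.Eventually.of_forall fun ξ => sq_nonneg _)).symm
  have hDconv : ∫⁻ ξ in quarterCone x (1/2), ENNReal.ofReal (‖fderiv ℝ u ξ‖ ^ 2)
      = ENNReal.ofReal D :=
    (ofReal_integral_eq_lintegral_ofReal hD2
      (Filter.Eventually.of_forall fun ξ => sq_nonneg _)).symm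
  have hWr : ∫⁻ t in Ioo (1/4:ℝ) (1/2), ENNReal.ofReal t = ENNReal.ofReal (3/32) := by
    have hint : IntegrableOn (fun t : ℝ => t) (Ioo (1/4:ℝ) (1/2)) :=
      (continuousOn_id.integrableOn_compact isCompact_Icc).mono_set Ioo_subset_Icc_self
    have hpos : 0 ≤ᵐ[volume.restrict (Ioo (1/4:ℝ) (1/2))] fun t : ℝ => t := by
      filter_upwards [ae_restrict_mem measurableSet_Ioo] with t ht
      exact le_of_lt (lt_trans (by norm_num) ht.1)
    rw [← ofReal_integral_eq_lintegral_ofReal hint hpos]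
    congr 1
    rw [setIntegral_congr_set Ioo_ae_eq_Ioc,
      ← intervalIntegral.integral_of_le (by norm_num : (1/4:ℝ) ≤ 1/2), integral_id]
    norm_num
  have hprodQ : (volume : Measure (ℝ × ℝ)).restrict Q =
      ((volume : Measure ℝ).restrict (Ioo (1/4:ℝ) (1/2))).prod
        ((volume : Measure ℝ).restrict (Ioo (0:ℝ) (π/2))) := by
    rw [hQ_def, Measure.prod_restrict, ← Measure.volume_eq_prod]
  have hθvol : (volume : Measure ℝ) (Ioo (0:ℝ) (π/2)) = ENNReal.ofReal (π/2) := by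
    rw [Real.volume_Ioo]; norm_num
  have hW : ∫⁻ p in Q, ENNReal.ofReal p.1 = ENNReal.ofReal (3/32) * ENNReal.ofReal (π/2) := by
    rw [hprodQ]
    have h1 : ∫⁻ p : ℝ × ℝ, ENNReal.ofReal p.1
        ∂(((volume : Measure ℝ).restrict (Ioo (1/4:ℝ) (1/2))).prod
          ((volume : Measure ℝ).restrict (Ioo (0:ℝ) (π/2))))
        = ∫⁻ p : ℝ × ℝ, ENNReal.ofReal p.1 * (fun _ : ℝ => (1:ℝ≥0∞)) p.2
        ∂(((volume : Measure ℝ).restrict (Ioo (1/4:ℝ) (1/2))).prod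
          ((volume : Measure ℝ).restrict (Ioo (0:ℝ) (π/2)))) := by
      simp
    rw [h1, lintegral_prod_mul ENNReal.measurable_ofReal.aemeasurable
      measurable_const.aemeasurable, hWr]
    simp [Measure.restrict_apply_univ, hθvol]
  -- L θ as a lower integral
  have hL_eq_G : ∀ θ ∈ Ioo (0:ℝ) (π/2), ENNReal.ofReal (L θ) = G θ := by
    intro θ hθ
    have hmapsto : ∀ ρ ∈ Icc ε (1/2:ℝ), ptE x (ρ, θ) ∈ quarterCone x (1/2) := fun ρ hρ =>
      ptE_mem_quarterCone (le_trans hε0.le hρ.1) hρ.2 hθ.1.le hθ.2.le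
    have hcont : ContinuousOn (fun ρ : ℝ => ρ * ‖fderiv ℝ u (ptE x (ρ, θ))‖ ^ 2)
        (Icc ε (1/2:ℝ)) := by
      refine continuousOn_id.mul (ContinuousOn.pow ?_ 2)
      refine ContinuousOn.norm ?_
      exact hfd.comp ((continuous_ptE x).comp
        (continuous_id.prodMk continuous_const)).continuousOn hmapsto
    have hint : IntegrableOn (fun ρ : ℝ => ρ * ‖fderiv ℝ u (ptE x (ρ, θ))‖ ^ 2)
        (Ioo ε (1/2:ℝ)) :=
      (hcont.integrableOn_compact isCompact_Icc).mono_set Ioo_subset_Icc_self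
    rw [hL_def]
    simp only
    have hpos : 0 ≤ᵐ[volume.restrict (Ioo ε (1/2:ℝ))]
        fun ρ : ℝ => ρ * ‖fderiv ℝ u (ptE x (ρ, θ))‖ ^ 2 := by
      filter_upwards [ae_restrict_mem measurableSet_Ioo] with ρ hρ
      exact mul_nonneg (by linarith [hρ.1]) (sq_nonneg _)
    rw [ofReal_integral_eq_lintegral_ofReal hint hpos]
    refine setLIntegral_congr_fun measurableSet_Ioo ?_
    intro ρ hρ
    rw [hF_def]
    simp only
    rw [ENNReal.ofReal_mul (by linarith [hρ.1] : (0:ℝ) ≤ ρ)]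
  have hL0 : ∀ θ : ℝ, 0 ≤ L θ := fun θ =>
    setIntegral_nonneg measurableSet_Ioo (fun ρ hρ => mul_nonneg (by linarith [hρ.1]) (sq_nonneg _))
  -- pointwise bound
  have hPW : ∀ᵐ p ∂(volume.restrict Q),
      ENNReal.ofReal (u x ^ 2) * ENNReal.ofReal p.1 ≤
      ENNReal.ofReal p.1 *
        ENNReal.ofReal (3 * u (ptE x p) ^ 2 + 3 * ε ^ 2 * S ^ 2 + 3 * K * L p.2) := by
    filter_upwards [ae_restrict_mem hQm] with p hp
    obtain ⟨p1, p2⟩ := p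
    rw [mul_comm]
    refine mul_le_mul_right (ENNReal.ofReal_le_ofReal ?_) _
    exact pw u x hd hfd hε0 hε hp.1 hp.2
  -- the three terms
  have hT1 : ∫⁻ p in Q, ENNReal.ofReal p.1 * ENNReal.ofReal (3 * u (ptE x p) ^ 2)
      ≤ ENNReal.ofReal 3 * ENNReal.ofReal A := by
    have heq : ∀ p : ℝ × ℝ, ENNReal.ofReal p.1 * ENNReal.ofReal (3 * u (ptE x p) ^ 2)
        = ENNReal.ofReal 3 * (ENNReal.ofReal p.1 * ENNReal.ofReal (u (ptE x p) ^ 2)) := by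
      intro p
      rw [ENNReal.ofReal_mul (by norm_num : (0:ℝ) ≤ 3)]
      ring
    simp_rw [heq]
    rw [lintegral_const_mul' _ _ ENNReal.ofReal_ne_top]
    refine mul_le_mul_right ?_ _
    rw [← hAconv]
    refine cov x (fun ξ => ENNReal.ofReal (u ξ ^ 2)) (by norm_num : (0:ℝ) < 1/4)
      ((quarterCone_measurableSet x _).diff (quarterCone_measurableSet x _)) ?_
    rintro p ⟨hp1, hp2⟩
    constructor
    · exact ptE_mem_quarterCone (by linarith [hp1.1]) hp1.2.le hp2.1.le hp2.2.le
    · intro hmem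
      have h := hmem.1
      rw [norm_ptE_sub, abs_of_nonneg (by linarith [hp1.1] : (0:ℝ) ≤ p.1)] at h
      linarith [hp1.1]
  have hT2 : ∫⁻ p in Q, ENNReal.ofReal p.1 * ENNReal.ofReal (3 * ε ^ 2 * S ^ 2)
      = ENNReal.ofReal (3 * ε ^ 2 * S ^ 2) * (ENNReal.ofReal (3/32) * ENNReal.ofReal (π/2)) := by
    simp_rw [mul_comm (ENNReal.ofReal _) (ENNReal.ofReal (3 * ε ^ 2 * S ^ 2))]
    rw [lintegral_const_mul' _ _ ENNReal.ofReal_ne_top, hW]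
  have hGD : ∫⁻ θ in Ioo (0:ℝ) (π/2), G θ ≤ ENNReal.ofReal D := by
    have hsymm : ∫⁻ p in Ioo ε (1/2:ℝ) ×ˢ Ioo (0:ℝ) (π/2), F p
        = ∫⁻ θ in Ioo (0:ℝ) (π/2), G θ := by
      rw [show (volume : Measure (ℝ × ℝ)).restrict (Ioo ε (1/2:ℝ) ×ˢ Ioo (0:ℝ) (π/2)) =
        ((volume : Measure ℝ).restrict (Ioo ε (1/2:ℝ))).prod
          ((volume : Measure ℝ).restrict (Ioo (0:ℝ) (π/2))) by
          rw [Measure.prod_restrict, ← Measure.volume_eq_prod]]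
      exact lintegral_prod_symm F hF_meas.aemeasurable
    rw [← hsymm, ← hDconv]
    exact cov x (fun ξ => ENNReal.ofReal (‖fderiv ℝ u ξ‖ ^ 2)) hε0
      (quarterCone_measurableSet x _)
      (fun p hp => ptE_mem_quarterCone (by linarith [hp.1.1]) hp.1.2.le hp.2.1.le hp.2.2.le)
  have hT3 : ∫⁻ p in Q, ENNReal.ofReal p.1 * (ENNReal.ofReal (3 * K) * G p.2)
      ≤ ENNReal.ofReal (3 * K) * (ENNReal.ofReal (3/32) * ENNReal.ofReal D) := by
    have heq : ∀ p : ℝ × ℝ, ENNReal.ofReal p.1 * (ENNReal.ofReal (3 * K) * G p.2)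
        = ENNReal.ofReal (3 * K) * (ENNReal.ofReal p.1 * G p.2) := fun p => by ring
    simp_rw [heq]
    rw [lintegral_const_mul' _ _ ENNReal.ofReal_ne_top]
    refine mul_le_mul_right ?_ _
    rw [hprodQ, lintegral_prod_mul ENNReal.measurable_ofReal.aemeasurable hG_meas.aemeasurable,
      hWr]
    exact mul_le_mul_right hGD _
  -- main chain
  have hmain : ENNReal.ofReal (u x ^ 2) * (ENNReal.ofReal (3/32) * ENNReal.ofReal (π/2)) ≤
      ENNReal.ofReal 3 * ENNReal.ofReal A
      + ENNReal.ofReal (3 * ε ^ 2 * S ^ 2) * (ENNReal.ofReal (3/32) * ENNReal.ofReal (π/2))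
      + ENNReal.ofReal (3 * K) * (ENNReal.ofReal (3/32) * ENNReal.ofReal D) := by
    calc ENNReal.ofReal (u x ^ 2) * (ENNReal.ofReal (3/32) * ENNReal.ofReal (π/2))
        = ∫⁻ p in Q, ENNReal.ofReal (u x ^ 2) * ENNReal.ofReal p.1 := by
          rw [lintegral_const_mul' _ _ ENNReal.ofReal_ne_top, hW]
      _ ≤ ∫⁻ p in Q, ENNReal.ofReal p.1 *
            ENNReal.ofReal (3 * u (ptE x p) ^ 2 + 3 * ε ^ 2 * S ^ 2 + 3 * K * L p.2) :=
          lintegral_mono_ae hPW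
      _ = ∫⁻ p in Q, (ENNReal.ofReal p.1 * ENNReal.ofReal (3 * u (ptE x p) ^ 2)
            + ENNReal.ofReal p.1 * ENNReal.ofReal (3 * ε ^ 2 * S ^ 2)
            + ENNReal.ofReal p.1 * (ENNReal.ofReal (3 * K) * G p.2)) := by
          refine setLIntegral_congr_fun hQm ?_
          intro p hp
          dsimp only
          rw [ENNReal.ofReal_add (add_nonneg (by positivity) (by positivity))
              (mul_nonneg (by positivity) (hL0 p.2)),
            ENNReal.ofReal_add (by positivity) (by positivity),
            ENNReal.ofReal_mul (by positivity : (0:ℝ) ≤ 3 * K),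
            hL_eq_G p.2 hp.2, mul_add, mul_add]
      _ = (∫⁻ p in Q, ENNReal.ofReal p.1 * ENNReal.ofReal (3 * u (ptE x p) ^ 2))
            + (∫⁻ p in Q, ENNReal.ofReal p.1 * ENNReal.ofReal (3 * ε ^ 2 * S ^ 2))
            + ∫⁻ p in Q, ENNReal.ofReal p.1 * (ENNReal.ofReal (3 * K) * G p.2) := by
          have hm1 : Measurable fun p : ℝ × ℝ =>
              ENNReal.ofReal p.1 * ENNReal.ofReal (3 * u (ptE x p) ^ 2) :=
            (ENNReal.measurable_ofReal.comp measurable_fst).mul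
              (ENNReal.measurable_ofReal.comp
                ((((hu.comp (continuous_ptE x)).measurable).pow_const 2).const_mul 3))
          have hm2 : Measurable fun p : ℝ × ℝ =>
              ENNReal.ofReal p.1 * ENNReal.ofReal (3 * ε ^ 2 * S ^ 2) :=
            (ENNReal.measurable_ofReal.comp measurable_fst).mul measurable_const
          have hm12 : Measurable fun p : ℝ × ℝ =>
              ENNReal.ofReal p.1 * ENNReal.ofReal (3 * u (ptE x p) ^ 2) +
                ENNReal.ofReal p.1 * ENNReal.ofReal (3 * ε ^ 2 * S ^ 2) := hm1.add hm2
          rw [lintegral_add_left hm12, lintegral_add_left hm1]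
      _ ≤ _ := add_le_add (add_le_add hT1 hT2.le) hT3
  -- convert back to a real inequality
  have hS2 : (0:ℝ) ≤ ε ^ 2 * S ^ 2 := mul_nonneg (sq_nonneg _) (sq_nonneg _)
  have hKD : (0:ℝ) ≤ K * D := mul_nonneg hK.le hD0
  have e0 : ENNReal.ofReal (u x ^ 2) * (ENNReal.ofReal (3/32) * ENNReal.ofReal (π/2))
      = ENNReal.ofReal (u x ^ 2 * (3/32 * (π/2))) := by
    rw [← ENNReal.ofReal_mul (by norm_num : (0:ℝ) ≤ 3/32), ← ENNReal.ofReal_mul (sq_nonneg _)]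
  have e1 : ENNReal.ofReal 3 * ENNReal.ofReal A = ENNReal.ofReal (3 * A) :=
    (ENNReal.ofReal_mul (by norm_num)).symm
  have e2 : ENNReal.ofReal (3 * ε ^ 2 * S ^ 2) * (ENNReal.ofReal (3/32) * ENNReal.ofReal (π/2))
      = ENNReal.ofReal (3 * ε ^ 2 * S ^ 2 * (3/32 * (π/2))) := by
    rw [← ENNReal.ofReal_mul (by norm_num : (0:ℝ) ≤ 3/32),
      ← ENNReal.ofReal_mul (by positivity : (0:ℝ) ≤ 3 * ε ^ 2 * S ^ 2)]
  have e3 : ENNReal.ofReal (3 * K) * (ENNReal.ofReal (3/32) * ENNReal.ofReal D)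
      = ENNReal.ofReal (3 * K * (3/32 * D)) := by
    rw [← ENNReal.ofReal_mul (by norm_num : (0:ℝ) ≤ 3/32),
      ← ENNReal.ofReal_mul (by positivity : (0:ℝ) ≤ 3 * K)]
  rw [e0, e1, e2, e3] at hmain
  have hb0 : (0:ℝ) ≤ 3 * ε ^ 2 * S ^ 2 * (3/32 * (π/2)) := by positivity
  have hc0 : (0:ℝ) ≤ 3 * K * (3/32 * D) := by
    have : (0:ℝ) ≤ K * D := hKD
    nlinarith
  rw [← ENNReal.ofReal_add (by positivity) hb0, ← ENNReal.ofReal_add (add_nonneg (by positivity) hb0) hc0] at hmain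
  have hreal : u x ^ 2 * (3/32 * (π/2)) ≤
      3 * A + 3 * ε ^ 2 * S ^ 2 * (3/32 * (π/2)) + 3 * K * (3/32 * D) :=
    (ENNReal.ofReal_le_ofReal_iff (add_nonneg (add_nonneg (by positivity) hb0) hc0)).1 hmain
  have hπ3 : (3:ℝ) < π := Real.pi_gt_three
  nlinarith [hreal, hA0, hD0, hK, hS2, hKD, sq_nonneg (u x),
    mul_nonneg hA0 (by linarith : (0:ℝ) ≤ π - 3),
    mul_nonneg hS2 (by linarith : (0:ℝ) ≤ π - 3),
    mul_nonneg hKD (by linarith : (0:ℝ) ≤ π - 3),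
    mul_nonneg (sq_nonneg (u x)) (by linarith : (0:ℝ) ≤ π - 3)]
end
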